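/- Let k ≥ 1 be an integer and let Γ be a finite connected k-GNDB graph with parameter γ and diameter d. Then d ≤ k·γ. -/
import Mathlib


/-- The set of vertices closer to `a` than to `b`. -/
def closerSet {V : Type*} (G : SimpleGraph V) (a b : V) : Set V :=
  {x | G.dist x a < G.dist x b}

private lemma dist_start_getVert_le {V : Type*} {G : SimpleGraph V}
    (hconn : G.Connected) {u v : V} (p : G.Walk u v) (j : ℕ) :
    G.dist u (p.getVert j) ≤ j := by
  induction p generalizing j with
  | nil => simp [SimpleGraph.Walk.getVert, SimpleGraph.dist_self]
  | @cons a b c h q ih =>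
    match j with
    | 0 => simp [SimpleGraph.Walk.getVert, SimpleGraph.dist_self]
    | j + 1 =>
      rw [SimpleGraph.Walk.getVert_cons_succ]
      calc G.dist a (q.getVert j)
            ≤ G.dist a b + G.dist b (q.getVert j) := hconn.dist_triangle
        _ ≤ 1 + j := by
            gcongr
            · simpa using SimpleGraph.dist_le (SimpleGraph.Walk.cons h SimpleGraph.Walk.nil)
            · exact ih j
        _ = j + 1 := by omega

private lemma dist_getVert_getVert_le {V : Type*} {G : SimpleGraph V}
    (hconn : G.Connected) {u v : V} (p : G.Walk u v) (i j : ℕ) (hij : i ≤ j) :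
    G.dist (p.getVert i) (p.getVert j) ≤ j - i := by
  induction p generalizing i j with
  | nil => simp [SimpleGraph.Walk.getVert, SimpleGraph.dist_self]
  | @cons a b c h q ih =>
    match i, j with
    | 0, j =>
      simpa using dist_start_getVert_le hconn (SimpleGraph.Walk.cons h q) j
    | i + 1, j + 1 =>
      simpa [SimpleGraph.Walk.getVert_cons_succ, Nat.succ_sub_succ] using ih i j (by omega)

private lemma dist_getVert_end_le {V : Type*} {G : SimpleGraph V}
    (hconn : G.Connected) {u v : V} (p : G.Walk u v) (j : ℕ) (hj : j ≤ p.length) :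
    G.dist (p.getVert j) v ≤ p.length - j := by
  have := dist_getVert_getVert_le hconn p j p.length hj
  rwa [p.getVert_length] at this

/-- Let `k ≥ 1` and let `Γ` be a finite connected `k`-GNDB graph with parameter `γ` and
diameter `d`. Then `d ≤ k·γ`. -/
theorem stmt_3 {V : Type*} [Fintype V] (G : SimpleGraph V) (hconn : G.Connected)
    (k : ℕ) (hk : 1 ≤ k) (γ : ℕ) (hγ : 0 < γ)
    (hGNDB : ∀ a b : V, G.Adj a b →
      ({(closerSet G a b).ncard, (closerSet G b a).ncard} : Set ℕ) = {γ, k * γ}) :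
    G.diam ≤ k * γ := by
  have : Nonempty V := hconn.nonempty
  obtain ⟨u, v, huv⟩ := G.exists_dist_eq_diam
  set d := G.diam with hd
  rcases Nat.eq_zero_or_pos d with h0 | hdpos
  · omega
  obtain ⟨p, hp⟩ := hconn.exists_walk_length_eq_dist u v
  rw [huv] at hp
  -- distances along the geodesic
  have hdistv : ∀ j ≤ d, G.dist (p.getVert j) v = d - j := by
    intro j hj
    have h1 : G.dist (p.getVert j) v ≤ d - j := by
      have := dist_getVert_end_le hconn p j (by omega)
      rwa [hp] at this
    have h2 : G.dist u (p.getVert j) ≤ j := dist_start_getVert_le hconn p j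
    have h3 : d ≤ G.dist u (p.getVert j) + G.dist (p.getVert j) v := by
      rw [← huv]; exact hconn.dist_triangle
    omega
  set a := p.getVert (d - 1) with ha
  have hab : G.Adj a v := by
    have := p.adj_getVert_succ (i := d - 1) (by omega)
    have hsucc : d - 1 + 1 = d := by omega
    rw [hsucc] at this
    rwa [show p.getVert d = v by rw [← hp]; exact p.getVert_length] at this
  -- the first d vertices of the geodesic are all in closerSet G a v
  have hsub : (fun j => p.getVert j) '' {i | i < d} ⊆ closerSet G a v := by
    rintro x ⟨j, hj, rfl⟩
    simp only [Set.mem_setOf_eq] at hj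
    have hxa : G.dist (p.getVert j) a ≤ d - 1 - j :=
      dist_getVert_getVert_le hconn p j (d - 1) (by omega)
    have hxv : G.dist (p.getVert j) v = d - j := hdistv j (by omega)
    simp only [closerSet, Set.mem_setOf_eq, hxv]
    omega
  have hinj : Set.InjOn (fun j => p.getVert j) {i | i < d} := by
    intro i hi j hj hij
    simp only [Set.mem_setOf_eq] at hi hj
    have h1 := hdistv i (by omega)
    have h2 := hdistv j (by omega)
    simp only at hij
    rw [hij, h2] at h1
    omega
  have hcard : d ≤ (closerSet G a v).ncard := by
    have h1 : ((fun j => p.getVert j) '' {i | i < d}).ncard = d := by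
      rw [Set.ncard_image_of_injOn hinj]
      have : {i | i < d} = ↑(Finset.range d) := by ext; simp
      rw [this, Set.ncard_coe_finset, Finset.card_range]
    rw [← h1]
    exact Set.ncard_le_ncard hsub (Set.toFinite _)
  -- ncard ∈ {γ, kγ}
  have hmem : (closerSet G a v).ncard ∈ ({γ, k * γ} : Set ℕ) := by
    rw [← hGNDB a v hab]; left; rfl
  rcases hmem with h | h
  · have : γ ≤ k * γ := Nat.le_mul_of_pos_left γ hk
    omega
  · simp only [Set.mem_singleton_iff] at h; omega
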